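/- Fix an integer n with 1 ≤ n ≤ N_L and write C*_net(N, N_coh) = (1 − N/N_coh)·max_{p ∈ Ω(N)} C_sum(p). Then for every real N_coh with N_coh > Δ_n one has C*_net(2n+1, N_coh) > C*_net(2n−1, N_coh), and for every real N_coh with 0 < N_coh < Δ_n one has C*_net(2n−1, N_coh) > C*_net(2n+1, N_coh). -/

import Mathlib

/-- A pilot assignment vector `p = (p_0, …, p_{m-1})` is valid if `0 ≤ p_i ≤ 3^i`
for every `i` and `Σ_i p_i · 3^{-i} = 1`. -/
def validP {m : ℕ} (p : Fin m → ℤ) : Prop :=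
  (∀ i, 0 ≤ p i ∧ p i ≤ 3 ^ (i : ℕ)) ∧
  (∑ i, (p i : ℝ) / 3 ^ (i : ℕ)) = 1

/-- The pilot length `N_pil(p) = Σ_i p_i`. -/
def Npil {m : ℕ} (p : Fin m → ℤ) : ℤ := ∑ i, p i

/-- The per-cell sum rate `C_sum(p) = Σ_i 3^{-i}·p_i·C_i` with `C_i = C_0 + i·d`. -/
noncomputable def Csum {m : ℕ} (C0 d : ℝ) (p : Fin m → ℤ) : ℝ :=
  ∑ i, (p i : ℝ) / 3 ^ (i : ℕ) * (C0 + (i : ℕ) * d)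

/-- `χ(N_p0) = min{k ∈ ℕ : Σ_{i=0}^{k} 3^i > (N_p0 - 1)/2}`. -/
noncomputable def chiN (N : ℤ) : ℕ :=
  sInf {k : ℕ | (N - 1) / 2 < ∑ i ∈ Finset.range (k + 1), (3 : ℤ) ^ i}

/-- The closed-form optimal pilot assignment vector of Theorem 1:
`p'_i = Σ_{s=0}^{i} 3^s - (N-1)/2` if `i = χ(N)`,
`p'_i = 3·((N-1)/2 - Σ_{s=0}^{i-2} 3^s)` if `i = χ(N) + 1 ≤ m-1`,
and `p'_i = 0` otherwise. -/
noncomputable def popt (m : ℕ) (N : ℤ) : Fin m → ℤ := fun i =>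
  if (i : ℕ) = chiN N then (∑ s ∈ Finset.range (chiN N + 1), 3 ^ s) - (N - 1) / 2
  else if (i : ℕ) = chiN N + 1 then
    3 * ((N - 1) / 2 - ∑ s ∈ Finset.range (chiN N), 3 ^ s)
  else 0

/-- The intersection point `Δ_n = 2·(2n - 1 - Σ_{i=0}^{χ(2n-1)-1} 3^i + ξ(n)) + 1`,
where `ξ(n) = 3^{χ(2n-1)}·C_{χ(2n-1)}/d` and `C_i = C_0 + i·d`. -/
noncomputable def Delta (C0 d : ℝ) (n : ℕ) : ℝ :=
  2 * ((2 * (n : ℝ) - 1) - (∑ i ∈ Finset.range (chiN (2 * (n : ℤ) - 1)), (3 : ℝ) ^ i) +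
    3 ^ chiN (2 * (n : ℤ) - 1) * (C0 + (chiN (2 * (n : ℤ) - 1) : ℝ) * d) / d) + 1


def Sg (k : ℕ) : ℤ := ∑ i ∈ Finset.range k, (3:ℤ) ^ i

lemma Sg_succ (k : ℕ) : Sg (k+1) = Sg k + 3 ^ k := Finset.sum_range_succ _ _

lemma Sg_eq (k : ℕ) : 2 * Sg k + 1 = 3 ^ k := by
  induction k with
  | zero => simp [Sg]
  | succ k ih => rw [Sg_succ, pow_succ]; linarith

lemma Sg_nonneg (k : ℕ) : 0 ≤ Sg k := by
  have := Sg_eq k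
  have h3 : (1:ℤ) ≤ 3 ^ k := one_le_pow₀ (by norm_num)
  linarith

lemma Sg_strictMono : StrictMono Sg := by
  apply strictMono_nat_of_lt_succ
  intro k
  have h3 : (1:ℤ) ≤ 3 ^ k := one_le_pow₀ (by norm_num)
  rw [Sg_succ]; linarith

lemma two_mul_lt_pow (k : ℕ) : 2 * k + 1 ≤ 3 ^ k := by
  induction k with
  | zero => norm_num
  | succ k ih =>
    have : (1:ℕ) ≤ 3 ^ k := Nat.one_le_pow _ _ (by norm_num)
    calc 2 * (k+1) + 1 = (2*k+1) + 2 := by ring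
    _ ≤ 3 ^ k + 2 := by omega
    _ ≤ 3 ^ (k+1) := by rw [pow_succ]; omega

lemma le_Sg (k : ℕ) : (k : ℤ) ≤ Sg k := by
  have h1 := Sg_eq k
  have h2 : (2 * k + 1 : ℤ) ≤ 3 ^ k := by exact_mod_cast two_mul_lt_pow k
  linarith

lemma chi_spec (N M : ℤ) (hNM : N = 2 * M + 1) (hM : 0 ≤ M) :
    Sg (chiN N) ≤ M ∧ M < Sg (chiN N + 1) := by
  have hdiv : (N - 1) / 2 = M := by omega
  have hset : {k : ℕ | (N - 1) / 2 < ∑ i ∈ Finset.range (k + 1), (3 : ℤ) ^ i}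
      = {k : ℕ | M < Sg (k + 1)} := by rw [hdiv]; rfl
  have hne : {k : ℕ | M < Sg (k + 1)}.Nonempty := by
    refine ⟨M.toNat, ?_⟩
    have h1 := le_Sg (M.toNat + 1)
    have h2 : (M.toNat : ℤ) = M := Int.toNat_of_nonneg hM
    simp only [Set.mem_setOf_eq]
    push_cast at h1
    omega
  have hchi : chiN N = sInf {k : ℕ | M < Sg (k + 1)} := by rw [chiN, hset]
  constructor
  · rcases Nat.eq_zero_or_pos (chiN N) with h0 | hpos
    · rw [h0]; simpa [Sg] using hM
    · by_contra hc
      push_neg at hc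
      have hmem : chiN N - 1 ∈ {k : ℕ | M < Sg (k + 1)} := by
        simp only [Set.mem_setOf_eq]
        have : chiN N - 1 + 1 = chiN N := by omega
        rw [this]; exact hc
      have := Nat.sInf_le (s := {k : ℕ | M < Sg (k + 1)}) hmem
      rw [← hchi] at this
      omega
  · have := Nat.sInf_mem hne
    rw [← hchi] at this
    exact this

lemma coeff_le (i k : ℕ) : (2 * (i:ℝ) - 2 * k + 1) * 3 ^ k ≤ 3 ^ i := by
  rcases le_or_gt k i with h | h
  · obtain ⟨j, rfl⟩ := Nat.exists_eq_add_of_le h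
    have h2 : (2 * j + 1 : ℝ) ≤ 3 ^ j := by exact_mod_cast two_mul_lt_pow j
    have h3 : (0:ℝ) < 3 ^ k := by positivity
    have : (2 * ((k + j : ℕ) : ℝ) - 2 * k + 1) = 2 * j + 1 := by push_cast; ring
    rw [this, pow_add]
    nlinarith
  · have h1 : (2 * (i:ℝ) - 2 * k + 1) ≤ -1 := by
      have : (i:ℝ) + 1 ≤ k := by exact_mod_cast h
      linarith
    have h3 : (0:ℝ) < 3 ^ k := by positivity
    have h4 : (0:ℝ) < 3 ^ i := by positivity
    nlinarith

lemma csum_le {m : ℕ} (C0 d : ℝ) (hd : 0 < d) (k : ℕ) (p : Fin m → ℤ) (hp : validP p) :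
    Csum C0 d p ≤ C0 + d * ((k:ℝ) - 1/2 + (Npil p : ℝ) / (2 * 3 ^ k)) := by
  obtain ⟨hbd, hmass⟩ := hp
  have key : ∀ i : Fin m, (p i : ℝ) / 3 ^ (i:ℕ) * (C0 + (i:ℕ) * d)
      ≤ C0 * ((p i : ℝ) / 3 ^ (i:ℕ))
        + d * (((k:ℝ) - 1/2) * ((p i : ℝ) / 3 ^ (i:ℕ)) + (p i : ℝ) / (2 * 3 ^ k)) := by
    intro i
    have hpi : (0:ℝ) ≤ (p i : ℝ) := by exact_mod_cast (hbd i).1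
    have h3i : (0:ℝ) < 3 ^ (i:ℕ) := by positivity
    have h3k : (0:ℝ) < 3 ^ k := by positivity
    have hc := coeff_le (i:ℕ) k
    -- reduces to p_i * ((i - k + 1/2)/3^i - 1/(2*3^k)) ≤ 0
    have hfrac : ((i:ℕ):ℝ) * (1 / 3 ^ (i:ℕ)) ≤ ((k:ℝ) - 1/2) * (1 / 3 ^ (i:ℕ)) + 1 / (2 * 3 ^ k) := by
      have e : ((k:ℝ) - 1/2) * (1 / 3 ^ (i:ℕ)) + 1 / (2 * 3 ^ k) - ((i:ℕ):ℝ) * (1 / 3 ^ (i:ℕ))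
          = ((3:ℝ) ^ (i:ℕ) - (2 * ((i:ℕ):ℝ) - 2 * k + 1) * 3 ^ k) / (2 * 3 ^ k * 3 ^ (i:ℕ)) := by
        field_simp
        ring
      have hnum : (0:ℝ) ≤ (3:ℝ) ^ (i:ℕ) - (2 * ((i:ℕ):ℝ) - 2 * k + 1) * 3 ^ k := by linarith
      have : (0:ℝ) ≤ ((k:ℝ) - 1/2) * (1 / 3 ^ (i:ℕ)) + 1 / (2 * 3 ^ k) - ((i:ℕ):ℝ) * (1 / 3 ^ (i:ℕ)) := by
        rw [e]; positivity
      linarith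
    have := mul_le_mul_of_nonneg_left hfrac hpi
    have hd' := hd.le
    calc (p i : ℝ) / 3 ^ (i:ℕ) * (C0 + (i:ℕ) * d)
        = C0 * ((p i : ℝ) / 3 ^ (i:ℕ)) + d * ((p i : ℝ) * (((i:ℕ):ℝ) * (1 / 3 ^ (i:ℕ)))) := by ring
      _ ≤ C0 * ((p i : ℝ) / 3 ^ (i:ℕ))
          + d * ((p i : ℝ) * (((k:ℝ) - 1/2) * (1 / 3 ^ (i:ℕ)) + 1 / (2 * 3 ^ k))) := by
          have h2 := mul_le_mul_of_nonneg_left this hd'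
          linarith
      _ = C0 * ((p i : ℝ) / 3 ^ (i:ℕ))
          + d * (((k:ℝ) - 1/2) * ((p i : ℝ) / 3 ^ (i:ℕ)) + (p i : ℝ) / (2 * 3 ^ k)) := by ring
  have hsum := Finset.sum_le_sum (fun i (_ : i ∈ Finset.univ) => key i)
  have hNp : ((Npil p : ℤ) : ℝ) = ∑ i : Fin m, (p i : ℝ) := by rw [Npil]; push_cast; rfl
  have expand : (∑ i : Fin m, (C0 * ((p i : ℝ) / 3 ^ (i:ℕ))
        + d * (((k:ℝ) - 1/2) * ((p i : ℝ) / 3 ^ (i:ℕ)) + (p i : ℝ) / (2 * 3 ^ k))))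
      = C0 * (∑ i : Fin m, (p i : ℝ) / 3 ^ (i:ℕ))
        + d * (((k:ℝ) - 1/2) * (∑ i : Fin m, (p i : ℝ) / 3 ^ (i:ℕ))
          + (∑ i : Fin m, (p i : ℝ)) / (2 * 3 ^ k)) := by
    simp only [Finset.mul_sum, Finset.sum_div, mul_add, ← Finset.sum_add_distrib]
  rw [Csum]
  refine le_trans hsum ?_
  rw [expand, hmass, ← hNp]
  ring_nf
  exact le_refl _

lemma fin_sum_ite {α : Type*} [AddCommMonoid α] (m k : ℕ) (hk : k < m) (f g : ℕ → α)
    (hg : k + 1 < m ∨ g (k+1) = 0) :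
    (∑ i : Fin m, ((if (i:ℕ) = k then f (i:ℕ) else 0) + (if (i:ℕ) = k+1 then g (i:ℕ) else 0)))
      = f k + g (k+1) := by
  rw [Finset.sum_add_distrib]
  rw [Fin.sum_univ_eq_sum_range (fun j => if j = k then f j else 0) m]
  rw [Fin.sum_univ_eq_sum_range (fun j => if j = k+1 then g j else 0) m]
  rw [Finset.sum_ite_eq' (Finset.range m) k f, Finset.sum_ite_eq' (Finset.range m) (k+1) g]
  rw [if_pos (Finset.mem_range.mpr hk)]
  rcases hg with h | h
  · rw [if_pos (Finset.mem_range.mpr h)]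
  · rw [h]
    split_ifs <;> simp

lemma popt_valid (m : ℕ) (hm : 1 ≤ m) (C0 d : ℝ) (N M : ℤ) (hNM : N = 2 * M + 1)
    (hM : 0 ≤ M) (hMm : M ≤ Sg (m - 1)) :
    validP (popt m N) ∧ Npil (popt m N) = N ∧
    Csum C0 d (popt m N) =
      C0 + d * ((chiN N : ℝ) - 1/2 + (N : ℝ) / (2 * 3 ^ chiN N)) := by
  obtain ⟨hlo, hhi⟩ := chi_spec N M hNM hM
  set k := chiN N with hk
  have hdiv : (N - 1) / 2 = M := by omega
  have hpopt : popt m N = fun i : Fin m =>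
      (if (i:ℕ) = k then Sg (k+1) - M else 0) + (if (i:ℕ) = k+1 then 3 * (M - Sg k) else 0) := by
    funext i
    show (if (i:ℕ) = k then (∑ s ∈ Finset.range (k + 1), 3 ^ s) - (N-1)/2
      else if (i:ℕ) = k + 1 then 3 * ((N-1)/2 - ∑ s ∈ Finset.range k, 3 ^ s) else 0) = _
    rw [hdiv]
    have h1 : (∑ s ∈ Finset.range (k + 1), (3:ℤ) ^ s) = Sg (k+1) := rfl
    have h2 : (∑ s ∈ Finset.range k, (3:ℤ) ^ s) = Sg k := rfl
    rw [h1, h2]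
    split_ifs with ha hb <;> omega
  -- k < m and the edge case
  have hkm : k < m := by
    have hmem : m - 1 ∈ {j : ℕ | (N - 1) / 2 < ∑ i ∈ Finset.range (j + 1), (3 : ℤ) ^ i} := by
      have : M < Sg (m - 1 + 1) := lt_of_le_of_lt hMm (Sg_strictMono (Nat.lt_succ_self _))
      simp only [Set.mem_setOf_eq, hdiv]; exact this
    have h2 : chiN N ≤ m - 1 := Nat.sInf_le hmem
    omega
  have hedge : k + 1 < m ∨ M - Sg k = 0 := by
    rcases lt_or_ge (k+1) m with h | h
    · exact Or.inl h
    · right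
      have hk1 : k = m - 1 := by omega
      have h3 : Sg (m-1) ≤ M := by rw [← hk1]; exact hlo
      rw [hk1]
      omega
  have h3k : (0:ℝ) < 3 ^ k := by positivity
  have hSe : (2:ℝ) * ((Sg k : ℤ) : ℝ) + 1 = 3 ^ k := by exact_mod_cast Sg_eq k
  have hSsucc : ((Sg (k+1) : ℤ) : ℝ) = ((Sg k : ℤ) : ℝ) + 3 ^ k := by exact_mod_cast Sg_succ k
  have hb1 : 0 ≤ Sg (k+1) - M ∧ Sg (k+1) - M ≤ 3 ^ k := by
    have := Sg_succ k; omega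
  have hb2 : 0 ≤ 3 * (M - Sg k) ∧ 3 * (M - Sg k) ≤ 3 ^ (k+1) := by
    have := Sg_succ k
    have h31 : (3:ℤ) ^ (k+1) = 3 * 3 ^ k := by ring
    omega
  refine ⟨⟨?_, ?_⟩, ?_, ?_⟩
  · -- bounds
    intro i
    rw [hpopt]
    dsimp only
    split_ifs with ha hb hb
    · omega
    · rw [ha]; omega
    · rw [hb]; omega
    · have hpow : (0:ℤ) ≤ 3 ^ (i:ℕ) := by positivity
      omega
  · -- mass
    rw [hpopt]
    have heq : ∀ i : Fin m,
        ((((if (i:ℕ) = k then Sg (k+1) - M else 0) + (if (i:ℕ) = k+1 then 3 * (M - Sg k) else 0)) : ℤ) : ℝ)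
          / 3 ^ (i:ℕ)
        = (if (i:ℕ) = k then (fun j : ℕ => ((Sg (k+1) - M : ℤ) : ℝ) / (3:ℝ) ^ j) (i:ℕ) else 0)
          + (if (i:ℕ) = k+1 then (fun j : ℕ => ((3 * (M - Sg k) : ℤ) : ℝ) / (3:ℝ) ^ j) (i:ℕ) else 0) := by
      intro i
      dsimp only
      split_ifs with ha hb hb
      · exact absurd ha (by omega)
      · push_cast; ring
      · push_cast; ring
      · push_cast; ring
    rw [Finset.sum_congr rfl (fun i _ => heq i)]
    rw [fin_sum_ite (α := ℝ) m k hkm (fun j : ℕ => ((Sg (k+1) - M : ℤ) : ℝ) / (3:ℝ) ^ j)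
      (fun j : ℕ => ((3 * (M - Sg k) : ℤ) : ℝ) / (3:ℝ) ^ j)
      (by rcases hedge with h | h
          · exact Or.inl h
          · right
            have hz : (3 * (M - Sg k) : ℤ) = 0 := by omega
            simp [hz])]
    push_cast [Sg_succ]
    field_simp
    ring
  · -- Npil
    rw [Npil, hpopt]
    rw [fin_sum_ite m k hkm (fun _ => Sg (k+1) - M) (fun _ => 3 * (M - Sg k))
      (by rcases hedge with h | h
          · exact Or.inl h
          · right; omega)]
    have := Sg_succ k
    have := Sg_eq k
    omega
  · -- Csum
    rw [Csum, hpopt]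
    have heq : ∀ i : Fin m,
        ((((if (i:ℕ) = k then Sg (k+1) - M else 0) + (if (i:ℕ) = k+1 then 3 * (M - Sg k) else 0)) : ℤ) : ℝ)
          / 3 ^ (i:ℕ) * (C0 + (i:ℕ) * d)
        = (if (i:ℕ) = k then (fun j : ℕ => ((Sg (k+1) - M : ℤ) : ℝ) / (3:ℝ) ^ j * (C0 + (j:ℝ) * d)) (i:ℕ) else 0)
          + (if (i:ℕ) = k+1 then (fun j : ℕ => ((3 * (M - Sg k) : ℤ) : ℝ) / (3:ℝ) ^ j * (C0 + (j:ℝ) * d)) (i:ℕ) else 0) := by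
      intro i
      dsimp only
      split_ifs with ha hb hb
      · exact absurd ha (by omega)
      · push_cast; ring
      · push_cast; ring
      · push_cast; ring
    rw [Finset.sum_congr rfl (fun i _ => heq i)]
    rw [fin_sum_ite (α := ℝ) m k hkm (fun j : ℕ => ((Sg (k+1) - M : ℤ) : ℝ) / (3:ℝ) ^ j * (C0 + (j:ℝ) * d))
      (fun j : ℕ => ((3 * (M - Sg k) : ℤ) : ℝ) / (3:ℝ) ^ j * (C0 + (j:ℝ) * d))
      (by rcases hedge with h | h
          · exact Or.inl h
          · right
            have hz : (3 * (M - Sg k) : ℤ) = 0 := by omega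
            simp [hz])]
    have hSkR : ((Sg k : ℤ) : ℝ) = (3 ^ k - 1) / 2 := by linarith
    rw [hNM]
    push_cast [Sg_succ, hSkR]
    field_simp
    ring

set_option maxHeartbeats 1000000 in
/-- For `1 ≤ n ≤ N_L`, writing `C*_net(N, N_coh) = (1 - N/N_coh)·max_{Ω(N)} C_sum`:
for `N_coh > Δ_n` the curve for pilot length `2n+1` is strictly above the one for
`2n-1`, and for `0 < N_coh < Δ_n` the opposite strict inequality holds. -/
theorem net_rate_curves_crossing (m : ℕ) (hm : 2 ≤ m)
    (C0 d : ℝ) (hC0 : 0 < C0) (hd : 0 < d)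
    (n : ℕ) (hn : 1 ≤ n) (hn' : 2 * n + 1 ≤ 3 ^ (m - 1))
    (V1 V2 : ℝ)
    (hV1 : IsGreatest {x : ℝ | ∃ p : Fin m → ℤ, validP p ∧ Npil p = 2 * (n : ℤ) - 1 ∧
      Csum C0 d p = x} V1)
    (hV2 : IsGreatest {x : ℝ | ∃ p : Fin m → ℤ, validP p ∧ Npil p = 2 * (n : ℤ) + 1 ∧
      Csum C0 d p = x} V2) :
    (∀ Ncoh : ℝ, Delta C0 d n < Ncoh →
      (1 - (2 * (n : ℝ) - 1) / Ncoh) * V1 < (1 - (2 * (n : ℝ) + 1) / Ncoh) * V2) ∧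
    (∀ Ncoh : ℝ, 0 < Ncoh → Ncoh < Delta C0 d n →
      (1 - (2 * (n : ℝ) + 1) / Ncoh) * V2 < (1 - (2 * (n : ℝ) - 1) / Ncoh) * V1) := by
  have hm1 : 1 ≤ m := by omega
  have hnZ : (1:ℤ) ≤ (n:ℤ) := by exact_mod_cast hn
  have hMm2 : (n:ℤ) ≤ Sg (m - 1) := by
    have h1 : ((2*n+1 : ℕ) : ℤ) ≤ ((3^(m-1) : ℕ) : ℤ) := by exact_mod_cast hn'
    have h2 := Sg_eq (m-1)
    push_cast at h1
    omega
  have hMm1 : (n:ℤ) - 1 ≤ Sg (m-1) := by omega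
  have hM1 : (0:ℤ) ≤ (n:ℤ) - 1 := by omega
  have hM2 : (0:ℤ) ≤ (n:ℤ) := by omega
  obtain ⟨hv1, hnp1, hcs1⟩ := popt_valid m hm1 C0 d (2*(n:ℤ)-1) ((n:ℤ)-1) (by ring) hM1 hMm1
  obtain ⟨hv2, hnp2, hcs2⟩ := popt_valid m hm1 C0 d (2*(n:ℤ)+1) ((n:ℤ)) (by ring) hM2 hMm2
  obtain ⟨hlo1, hhi1⟩ := chi_spec (2*(n:ℤ)-1) ((n:ℤ)-1) (by ring) hM1
  obtain ⟨hlo2, hhi2⟩ := chi_spec (2*(n:ℤ)+1) ((n:ℤ)) (by ring) hM2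
  set k1 := chiN (2*(n:ℤ)-1) with hk1
  set k2 := chiN (2*(n:ℤ)+1) with hk2
  have h3k1 : (0:ℝ) < 3 ^ k1 := by positivity
  -- exact values of V1, V2
  have hV1eq : V1 = C0 + d * ((k1:ℝ) - 1/2 + (2*(n:ℝ)-1) / (2 * 3 ^ k1)) := by
    have hmem : (C0 + d * ((k1:ℝ) - 1/2 + ((2*(n:ℤ)-1 : ℤ):ℝ) / (2 * 3 ^ k1)))
        ∈ {x : ℝ | ∃ p : Fin m → ℤ, validP p ∧ Npil p = 2 * (n : ℤ) - 1 ∧ Csum C0 d p = x} :=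
      ⟨popt m (2*(n:ℤ)-1), hv1, hnp1, hcs1⟩
    have h1 := hV1.2 hmem
    obtain ⟨p, hp, hnp, hcp⟩ := hV1.1
    have h2 := csum_le C0 d hd k1 p hp
    rw [hcp, hnp] at h2
    push_cast at h1 h2 ⊢
    linarith
  have hV2eq : V2 = C0 + d * ((k2:ℝ) - 1/2 + (2*(n:ℝ)+1) / (2 * 3 ^ k2)) := by
    have hmem : (C0 + d * ((k2:ℝ) - 1/2 + ((2*(n:ℤ)+1 : ℤ):ℝ) / (2 * 3 ^ k2)))
        ∈ {x : ℝ | ∃ p : Fin m → ℤ, validP p ∧ Npil p = 2 * (n : ℤ) + 1 ∧ Csum C0 d p = x} :=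
      ⟨popt m (2*(n:ℤ)+1), hv2, hnp2, hcs2⟩
    have h1 := hV2.2 hmem
    obtain ⟨p, hp, hnp, hcp⟩ := hV2.1
    have h2 := csum_le C0 d hd k2 p hp
    rw [hcp, hnp] at h2
    push_cast at h1 h2 ⊢
    linarith
  -- relation between k1 and k2
  have hcase : k2 = k1 ∨ (k2 = k1 + 1 ∧ (n:ℤ) = Sg (k1+1)) := by
    rcases lt_or_eq_of_le (show (n:ℤ) ≤ Sg (k1+1) by omega) with hlt | heq
    · left
      have ha : k2 ≤ k1 := by
        by_contra hc
        have h1 : k1 + 1 ≤ k2 := by omega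
        have := Sg_strictMono.monotone h1
        omega
      have hb : k1 ≤ k2 := by
        by_contra hc
        have h1 : k2 + 1 ≤ k1 := by omega
        have := Sg_strictMono.monotone h1
        omega
      omega
    · right
      refine ⟨?_, heq⟩
      have ha : k1 + 1 ≤ k2 := by
        by_contra hc
        have h1 : k2 + 1 ≤ k1 + 1 := by omega
        have := Sg_strictMono.monotone h1
        omega
      have hb : k2 ≤ k1 + 1 := by
        by_contra hc
        have h1 : k1 + 1 + 1 ≤ k2 := by omega
        have h2 := Sg_strictMono (show k1 + 1 < k1 + 1 + 1 by omega)
        have := Sg_strictMono.monotone h1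
        omega
      omega
  -- Delta in terms of Sg
  have hsumcast : ((Sg k1 : ℤ):ℝ) = ∑ i ∈ Finset.range k1, (3:ℝ)^i := by
    rw [Sg]; push_cast; rfl
  have hDelta : Delta C0 d n
      = 2*((2*(n:ℝ)-1) - ((Sg k1:ℤ):ℝ) + 3^k1*(C0 + (k1:ℝ)*d)/d) + 1 := by
    rw [Delta, ← hk1, ← hsumcast]
  have hSkR : ((Sg k1 : ℤ):ℝ) = ((3:ℝ)^k1 - 1)/2 := by
    have : (2:ℝ) * ((Sg k1 : ℤ) : ℝ) + 1 = 3 ^ k1 := by exact_mod_cast Sg_eq k1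
    linarith
  -- the two key identities
  have hkeys : V2 - V1 = d / 3^k1 ∧
      (2*(n:ℝ)+1)*V2 - (2*(n:ℝ)-1)*V1 = Delta C0 d n * (d / 3^k1) := by
    rcases hcase with hA | ⟨hB, hBe⟩
    · rw [hV1eq, hV2eq, hA, hDelta, hSkR]
      constructor
      · field_simp
        ring
      · field_simp
        ring
    · have hnR : (n:ℝ) = ((3:ℝ)^(k1+1) - 1)/2 := by
        have h1 : (2:ℝ) * ((Sg (k1+1) : ℤ) : ℝ) + 1 = 3 ^ (k1+1) := by exact_mod_cast Sg_eq (k1+1)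
        have h2 : ((n:ℕ):ℝ) = ((Sg (k1+1) : ℤ):ℝ) := by exact_mod_cast hBe
        rw [h2]
        linarith
      rw [hV1eq, hV2eq, hB, hDelta, hSkR, hnR]
      push_cast
      have h3 : (0:ℝ) < (3:ℝ)^(k1+1) := by positivity
      constructor
      · field_simp
        ring
      · field_simp
        ring
  obtain ⟨hdiff, hkey⟩ := hkeys
  -- Delta is positive
  have hSle : ((Sg k1 : ℤ):ℝ) ≤ (n:ℝ) - 1 := by exact_mod_cast hlo1
  have hxi : (0:ℝ) < 3^k1*(C0 + (k1:ℝ)*d)/d := by positivity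
  have hnR1 : (1:ℝ) ≤ (n:ℝ) := by exact_mod_cast hn
  have hDpos : 0 < Delta C0 d n := by
    rw [hDelta]
    nlinarith
  have hq : (0:ℝ) < d / 3^k1 := by positivity
  constructor
  · intro Nc hNc
    have hNc0 : 0 < Nc := hDpos.trans hNc
    have key := mul_lt_mul_of_pos_right hNc hq
    have expand : (1 - (2*(n:ℝ)-1)/Nc)*V1 - (1 - (2*(n:ℝ)+1)/Nc)*V2
        = (((2*(n:ℝ)+1)*V2 - (2*(n:ℝ)-1)*V1) - Nc*(V2-V1))/Nc := by
      field_simp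
      ring
    have hnum : ((2*(n:ℝ)+1)*V2 - (2*(n:ℝ)-1)*V1) - Nc*(V2-V1) < 0 := by
      rw [hkey, hdiff]
      linarith
    have h5 := div_neg_of_neg_of_pos hnum hNc0
    rw [← expand] at h5
    linarith
  · intro Nc hNc0 hNc
    have key := mul_lt_mul_of_pos_right hNc hq
    have expand : (1 - (2*(n:ℝ)-1)/Nc)*V1 - (1 - (2*(n:ℝ)+1)/Nc)*V2
        = (((2*(n:ℝ)+1)*V2 - (2*(n:ℝ)-1)*V1) - Nc*(V2-V1))/Nc := by
      field_simp
      ring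
    have hnum : 0 < ((2*(n:ℝ)+1)*V2 - (2*(n:ℝ)-1)*V1) - Nc*(V2-V1) := by
      rw [hkey, hdiff]
      linarith
    have h5 := div_pos hnum hNc0
    rw [← expand] at h5
    linarith
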